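/- Let R'' = {x ∈ Q(R) : v(x) ≥ 0} be the valuation ring of v in the fraction field Q(R) of R. Then R ⊆ R'' and the inclusion is strict: for any (i,j), (i',j) ∈ 𝔛 with i ≠ i', the element π_{(i,j)}/π_{(i',j)} of Q(R) satisfies v(π_{(i,j)}/π_{(i',j)}) = 0, hence lies in R'', but does not lie in R. Such pairs exist, e.g. (m, d_m) and (m+1, d_m) both lie in 𝔛. -/

import Mathlib

open PowerSeries

noncomputable section

/-- The index set 𝔛 = {(i,j) : j ≤ δ·p^i, j not a positive multiple of p},
where δ = d_m/p^m (the condition j ≤ δ·p^i is written as j·p^m ≤ d_m·p^i). -/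
def Xfrak (p m dm : ℕ) : Set (ℕ × ℕ) :=
  {x | x.2 * p ^ m ≤ dm * p ^ x.1 ∧ ¬(0 < x.2 ∧ p ∣ x.2)}

open scoped Classical in
/-- The valuation v on R = ℤ_p[[π_x : x ∈ 𝔛]] : for r ≠ 0 it is the minimum of
(1/δ)·∑_{(i,j)} j·u((i,j)) over the monomials π^u occurring in r, where
1/δ = p^m/d_m; and v(0) = ∞. -/
def vR {A : Type*} [CommSemiring A] (p m dm : ℕ)
    (r : MvPowerSeries (Xfrak p m dm) A) : WithTop ℚ :=
  if r = 0 then ⊤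
  else (((sInf {w : ℕ | ∃ u : (Xfrak p m dm) →₀ ℕ,
      MvPowerSeries.coeff (R := A) u r ≠ 0 ∧ w = u.sum fun x k => x.1.2 * k} : ℕ) : ℚ)
    * (p : ℚ) ^ m / (dm : ℚ) : ℚ)

lemma myX_ne_zero {A : Type*} [CommSemiring A] [Nontrivial A] (p m dm : ℕ) (x : Xfrak p m dm) :
    (MvPowerSeries.X x : MvPowerSeries (Xfrak p m dm) A) ≠ 0 := by
  intro h
  have := congrArg (MvPowerSeries.coeff (R := A) (Finsupp.single x 1)) h
  simp at this

lemma vR_one (p m dm : ℕ) [Fact p.Prime] : vR p m dm (1 : MvPowerSeries (Xfrak p m dm) ℤ_[p]) = 0 := by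
  classical
  rw [vR.eq_def, if_neg one_ne_zero]
  have hset : {w : ℕ | ∃ u : (Xfrak p m dm) →₀ ℕ,
      MvPowerSeries.coeff (R := ℤ_[p]) u 1 ≠ 0 ∧ w = u.sum fun x k => x.1.2 * k} = {0} := by
    ext n
    simp only [Set.mem_setOf_eq, Set.mem_singleton_iff, MvPowerSeries.coeff_one]
    constructor
    · rintro ⟨u, hu, rfl⟩
      split_ifs at hu with h
      · subst h; simp
      · simp at hu
    · rintro rfl
      exact ⟨0, by simp, by simp⟩
  rw [hset, csInf_singleton]
  norm_num

lemma vR_X (p m dm : ℕ) [Fact p.Prime] (x : Xfrak p m dm) :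
    vR p m dm (MvPowerSeries.X x : MvPowerSeries (Xfrak p m dm) ℤ_[p])
      = ((x.1.2 : ℚ) * (p : ℚ) ^ m / (dm : ℚ) : ℚ) := by
  classical
  rw [vR.eq_def, if_neg (myX_ne_zero p m dm x)]
  have hset : {w : ℕ | ∃ u : (Xfrak p m dm) →₀ ℕ,
      MvPowerSeries.coeff (R := ℤ_[p]) u (MvPowerSeries.X x) ≠ 0 ∧ w = u.sum fun y k => y.1.2 * k}
      = {x.1.2} := by
    ext n
    simp only [Set.mem_setOf_eq, Set.mem_singleton_iff, MvPowerSeries.coeff_X]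
    constructor
    · rintro ⟨u, hu, rfl⟩
      split_ifs at hu with h
      · subst h
        rw [Finsupp.sum_single_index (by simp)]
        simp
      · simp at hu
    · rintro rfl
      exact ⟨Finsupp.single x 1, by simp, by rw [Finsupp.sum_single_index (by simp)]; simp⟩
  rw [hset, csInf_singleton]

lemma vR_nonneg (p m dm : ℕ) [Fact p.Prime] (r : MvPowerSeries (Xfrak p m dm) ℤ_[p]) :
    0 ≤ vR p m dm r := by
  rw [vR.eq_def]
  split_ifs
  · exact le_top
  · exact_mod_cast (by positivity : (0:ℚ) ≤ _)

instance XfrakDomain (p m dm : ℕ) [Fact p.Prime] : IsDomain (MvPowerSeries (Xfrak p m dm) ℤ_[p]) :=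
  NoZeroDivisors.to_isDomain _

/-- let `w` be the extension of `v` to the fraction field `Q(R)`
(characterized by `w(c/b) = v(c) − v(b)`), and let `R'' = {x : w(x) ≥ 0}` be its
valuation ring.  Then `R ⊆ R''`, and the inclusion is strict: for `(i,j), (i',j) ∈ 𝔛`
with `i ≠ i'`, the element `π_{(i,j)}/π_{(i',j)}` has `w = 0` (so lies in `R''`) but is
not in (the image of) `R`.  Such pairs exist: `(m,d_m)` and `(m+1,d_m)` lie in `𝔛`. -/
theorem statement10 (p m dm : ℕ) [Fact p.Prime] (hdm : 1 ≤ dm) (hpdm : ¬ p ∣ dm)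
    (w : FractionRing (MvPowerSeries (Xfrak p m dm) ℤ_[p]) → WithTop ℚ)
    (hw : ∀ c b : MvPowerSeries (Xfrak p m dm) ℤ_[p], b ≠ 0 →
      w (algebraMap _ (FractionRing (MvPowerSeries (Xfrak p m dm) ℤ_[p])) c
          / algebraMap _ _ b) + vR p m dm b = vR p m dm c) :
    (∀ r : MvPowerSeries (Xfrak p m dm) ℤ_[p],
        0 ≤ w (algebraMap _ (FractionRing (MvPowerSeries (Xfrak p m dm) ℤ_[p])) r))
    ∧ (∀ x x' : Xfrak p m dm, x.1.1 ≠ x'.1.1 → x.1.2 = x'.1.2 →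
        w (algebraMap _ (FractionRing (MvPowerSeries (Xfrak p m dm) ℤ_[p]))
              (MvPowerSeries.X x : MvPowerSeries (Xfrak p m dm) ℤ_[p])
              / algebraMap _ _ (MvPowerSeries.X x' : MvPowerSeries (Xfrak p m dm) ℤ_[p])) = 0
        ∧ (algebraMap _ (FractionRing (MvPowerSeries (Xfrak p m dm) ℤ_[p]))
              (MvPowerSeries.X x : MvPowerSeries (Xfrak p m dm) ℤ_[p])
              / algebraMap _ _ (MvPowerSeries.X x' : MvPowerSeries (Xfrak p m dm) ℤ_[p]))
            ∉ Set.range (algebraMap (MvPowerSeries (Xfrak p m dm) ℤ_[p])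
                (FractionRing (MvPowerSeries (Xfrak p m dm) ℤ_[p]))))
    ∧ (m, dm) ∈ Xfrak p m dm ∧ (m + 1, dm) ∈ Xfrak p m dm := by
  classical
  have hp1 : 1 ≤ p := (Fact.out : p.Prime).one_le
  refine ⟨?_, ?_, ⟨le_refl _, fun h => hpdm h.2⟩,
    ⟨Nat.mul_le_mul_left dm (Nat.pow_le_pow_right hp1 (Nat.le_succ m)), fun h => hpdm h.2⟩⟩
  · intro r
    have h := hw r 1 one_ne_zero
    rw [map_one, div_one, vR_one, add_zero] at h
    rw [h]
    exact vR_nonneg p m dm r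
  · intro x x' hi hj
    have hb : (MvPowerSeries.X x' : MvPowerSeries (Xfrak p m dm) ℤ_[p]) ≠ 0 :=
      myX_ne_zero p m dm x'
    constructor
    · have h := hw (MvPowerSeries.X x) (MvPowerSeries.X x') hb
      rw [vR_X, vR_X, hj] at h
      exact WithTop.add_right_cancel WithTop.coe_ne_top (by rw [h, zero_add])
    · rintro ⟨r, hr⟩
      have hinj := IsFractionRing.injective (MvPowerSeries (Xfrak p m dm) ℤ_[p])
        (FractionRing (MvPowerSeries (Xfrak p m dm) ℤ_[p]))
      have hb' : algebraMap (MvPowerSeries (Xfrak p m dm) ℤ_[p])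
          (FractionRing (MvPowerSeries (Xfrak p m dm) ℤ_[p])) (MvPowerSeries.X x') ≠ 0 :=
        (map_ne_zero_iff _ hinj).mpr hb
      have hmul : r * MvPowerSeries.X x' = MvPowerSeries.X x := by
        apply hinj
        rw [map_mul]
        rw [eq_div_iff hb'] at hr
        exact hr
      have hxne : (x' : ℕ × ℕ) ≠ (x : ℕ × ℕ) := fun h => hi (by rw [Subtype.ext h])
      have hc := congrArg (MvPowerSeries.coeff (R := ℤ_[p]) (Finsupp.single x 1)) hmul
      rw [MvPowerSeries.X_def x', MvPowerSeries.coeff_mul_monomial, if_neg,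
        MvPowerSeries.coeff_index_single_self_X] at hc
      · exact one_ne_zero hc.symm
      · intro hle
        have := Finsupp.single_le_iff.mp hle
        rw [Finsupp.single_apply, if_neg (fun h => hxne (congrArg Subtype.val h.symm))] at this
        omega


end
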